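/- One federated EM step does not decrease the log-likelihood: let μ_1,…,μ_M ∈ ℝ^d and let each π_c be a strictly positive probability vector on {1,…,M}. Define q_{c,i}(m) = π_c(m)·N(x_{c,i}; μ_m, I) / Σ_{m'=1}^M π_c(m')·N(x_{c,i}; μ_{m'}, I), then π'_c(m) = (1/N_c)·Σ_{i=1}^{N_c} q_{c,i}(m) and μ'_m = (Σ_{c=1}^C Σ_{i=1}^{N_c} q_{c,i}(m)·x_{c,i}) / (Σ_{c=1}^C Σ_{i=1}^{N_c} q_{c,i}(m)) (the denominators are strictly positive). Then F(μ'_{1:M}, π'_{1:C}) ≥ F(μ_{1:M}, π_{1:C}). -/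

import Mathlib

open Finset

lemma gibbs_sum_le {ι : Type*} [Fintype ι] (q a : ι → ℝ) (hq : ∀ i, 0 < q i)
    (ha : ∀ i, 0 < a i) (hsum : ∑ i, q i = 1) :
    ∑ i, q i * (Real.log (a i) - Real.log (q i)) ≤ Real.log (∑ i, a i) := by
  have hne : (Finset.univ : Finset ι).Nonempty := by
    by_contra h
    rw [Finset.not_nonempty_iff_eq_empty] at h
    rw [h, Finset.sum_empty] at hsum; norm_num at hsum
  have hT : 0 < ∑ j, a j := Finset.sum_pos (fun i _ => ha i) hne
  have key : ∀ i ∈ Finset.univ, q i * (Real.log (a i) - Real.log (q i)) ≤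
      a i / (∑ j, a j) - q i + q i * Real.log (∑ j, a j) := by
    intro i _
    have h1 : Real.log (a i) - Real.log (q i) - Real.log (∑ j, a j)
        = Real.log (a i / (q i * (∑ j, a j))) := by
      rw [Real.log_div (ha i).ne' (mul_pos (hq i) hT).ne', Real.log_mul (hq i).ne' hT.ne']
      ring
    have h2 : Real.log (a i / (q i * (∑ j, a j))) ≤ a i / (q i * (∑ j, a j)) - 1 :=
      Real.log_le_sub_one_of_pos (div_pos (ha i) (mul_pos (hq i) hT))
    have h3 : q i * (Real.log (a i) - Real.log (q i) - Real.log (∑ j, a j))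
        ≤ q i * (a i / (q i * (∑ j, a j)) - 1) := by
      rw [h1]; exact mul_le_mul_of_nonneg_left h2 (hq i).le
    have h4 : q i * (a i / (q i * (∑ j, a j))) = a i / (∑ j, a j) := by
      rw [← mul_div_assoc, mul_div_mul_left _ _ (hq i).ne']
    nlinarith [h3, h4]
  calc ∑ i, q i * (Real.log (a i) - Real.log (q i))
      ≤ ∑ i, (a i / (∑ j, a j) - q i + q i * Real.log (∑ j, a j)) := Finset.sum_le_sum key
    _ = Real.log (∑ j, a j) := by
        rw [Finset.sum_add_distrib, Finset.sum_sub_distrib, ← Finset.sum_div,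
          ← Finset.sum_mul, hsum, div_self hT.ne']
        ring

lemma cross_entropy_le {ι : Type*} [Fintype ι] (p r : ι → ℝ) (hp : ∀ i, 0 < p i)
    (hr : ∀ i, 0 < r i) (hpsum : ∑ i, p i = 1) (hrsum : ∑ i, r i = 1) :
    ∑ i, p i * Real.log (r i) ≤ ∑ i, p i * Real.log (p i) := by
  have h := gibbs_sum_le p r hp hr hpsum
  rw [hrsum, Real.log_one] at h
  have h2 : ∑ i, (p i * Real.log (r i) - p i * Real.log (p i)) ≤ 0 := by
    calc ∑ i, (p i * Real.log (r i) - p i * Real.log (p i))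
        = ∑ i, p i * (Real.log (r i) - Real.log (p i)) := by
          refine Finset.sum_congr rfl fun i _ => ?_; ring
      _ ≤ 0 := h
  rw [Finset.sum_sub_distrib] at h2
  linarith

lemma wmean_min {ι : Type*} [Fintype ι] {E : Type*} [NormedAddCommGroup E]
    [InnerProductSpace ℝ E] (w : ι → ℝ) (x : ι → E) (hw : ∀ i, 0 ≤ w i)
    (μs b : E) (hz : ∑ i, w i • (x i - μs) = 0) :
    ∑ i, w i * ‖x i - μs‖ ^ 2 ≤ ∑ i, w i * ‖x i - b‖ ^ 2 := by
  have expand : ∀ i, w i * ‖x i - b‖ ^ 2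
      = w i * ‖x i - μs‖ ^ 2 + 2 * (w i * (inner ℝ (x i - μs) (μs - b) : ℝ))
        + w i * ‖μs - b‖ ^ 2 := by
    intro i
    have hx : x i - b = (x i - μs) + (μs - b) := by abel
    rw [hx, norm_add_sq_real]
    ring
  have hinner : ∑ i, w i * (inner ℝ (x i - μs) (μs - b) : ℝ) = 0 := by
    have h1 : ∀ i, w i * (inner ℝ (x i - μs) (μs - b) : ℝ)
        = (inner ℝ (w i • (x i - μs)) (μs - b) : ℝ) := by
      intro i; rw [real_inner_smul_left]
    calc ∑ i, w i * (inner ℝ (x i - μs) (μs - b) : ℝ)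
        = ∑ i, (inner ℝ (w i • (x i - μs)) (μs - b) : ℝ) := Finset.sum_congr rfl fun i _ => h1 i
      _ = (inner ℝ (∑ i, w i • (x i - μs)) (μs - b) : ℝ) := by rw [sum_inner]
      _ = 0 := by rw [hz, inner_zero_left]
  have h : ∑ i, w i * ‖x i - b‖ ^ 2
      = ∑ i, w i * ‖x i - μs‖ ^ 2 + 2 * (∑ i, w i * (inner ℝ (x i - μs) (μs - b) : ℝ))
        + (∑ i, w i) * ‖μs - b‖ ^ 2 := by
    rw [Finset.sum_congr rfl fun i _ => expand i, Finset.sum_add_distrib,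
      Finset.sum_add_distrib, ← Finset.mul_sum, ← Finset.sum_mul]
  rw [h, hinner]
  have : 0 ≤ (∑ i, w i) * ‖μs - b‖ ^ 2 :=
    mul_nonneg (Finset.sum_nonneg fun i _ => hw i) (by positivity)
  linarith




/-- Identity-covariance Gaussian density on `ℝ^d`:
`N(x; μ, I) = (2π)^(-d/2) · exp(-‖x-μ‖²/2)`. -/
noncomputable def gaussI (d : ℕ) (x μ : EuclideanSpace ℝ (Fin d)) : ℝ :=
  (2 * Real.pi) ^ (-(d : ℝ) / 2) * Real.exp (-‖x - μ‖ ^ 2 / 2)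

/-- Log-likelihood of the identity-covariance Gaussian mixture across all clients:
`F(μ_{1:M}, π_{1:C}) = Σ_c Σ_i log(Σ_m π_c(m) N(x_{c,i}; μ_m, I))`. -/
noncomputable def logLik (d C M : ℕ) (N : Fin C → ℕ)
    (x : (c : Fin C) → Fin (N c) → EuclideanSpace ℝ (Fin d))
    (μ : Fin M → EuclideanSpace ℝ (Fin d))
    (π : Fin C → Fin M → ℝ) : ℝ :=
  ∑ c, ∑ i, Real.log (∑ m, π c m * gaussI d (x c i) (μ m))

/-- The EM surrogate function
`G(μ_{1:M}, π_{1:C}; q) = Σ_c Σ_i Σ_m q_{c,i}(m)·[log π_c(m) − (d/2)·log(2π)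
  − ‖x_{c,i} − μ_m‖²/2 − log q_{c,i}(m)]`. -/
noncomputable def surrogate (d C M : ℕ) (N : Fin C → ℕ)
    (x : (c : Fin C) → Fin (N c) → EuclideanSpace ℝ (Fin d))
    (μ : Fin M → EuclideanSpace ℝ (Fin d))
    (π : Fin C → Fin M → ℝ)
    (q : (c : Fin C) → Fin (N c) → Fin M → ℝ) : ℝ :=
  ∑ c, ∑ i, ∑ m, q c i m *
    (Real.log (π c m) - (d : ℝ) / 2 * Real.log (2 * Real.pi)
      - ‖x c i - μ m‖ ^ 2 / 2 - Real.log (q c i m))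


/-- One federated EM step does not decrease the log-likelihood. -/
theorem em_step_logLik_nondecreasing
    (d C M : ℕ) (hC : 1 ≤ C) (hM : 1 ≤ M)
    (N : Fin C → ℕ) (hN : ∀ c, 1 ≤ N c)
    (x : (c : Fin C) → Fin (N c) → EuclideanSpace ℝ (Fin d))
    (μ : Fin M → EuclideanSpace ℝ (Fin d))
    (π : Fin C → Fin M → ℝ)
    (hπpos : ∀ c m, 0 < π c m) (hπsum : ∀ c, ∑ m, π c m = 1)
    (q : (c : Fin C) → Fin (N c) → Fin M → ℝ)
    (hq : ∀ c i m, q c i m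
      = π c m * gaussI d (x c i) (μ m) / ∑ m', π c m' * gaussI d (x c i) (μ m'))
    (π' : Fin C → Fin M → ℝ)
    (hπ' : ∀ c m, π' c m = ((N c : ℝ))⁻¹ * ∑ i, q c i m)
    (μ' : Fin M → EuclideanSpace ℝ (Fin d))
    (hμ' : ∀ m, μ' m
      = (∑ c, ∑ i, q c i m)⁻¹ • ∑ c, ∑ i, q c i m • x c i)
    (hden : ∀ m, 0 < ∑ c, ∑ i, q c i m) :
    logLik d C M N x μ π ≤ logLik d C M N x μ' π' := by
  haveI : Nonempty (Fin M) := Fin.pos_iff_nonempty.mp hM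
  haveI hNinst : ∀ c, Nonempty (Fin (N c)) := fun c => Fin.pos_iff_nonempty.mp (hN c)
  have hNne : ∀ c, ((N c : ℝ)) ≠ 0 := fun c => Nat.cast_ne_zero.mpr (Nat.one_le_iff_ne_zero.mp (hN c))
  -- positivity of the Gaussian
  have hg : ∀ (y m' : EuclideanSpace ℝ (Fin d)), 0 < gaussI d y m' := by
    intro y m'
    unfold gaussI
    have h2π : (0:ℝ) < 2 * Real.pi := by positivity
    exact mul_pos (Real.rpow_pos_of_pos h2π _) (Real.exp_pos _)
  have hlogg : ∀ (y m' : EuclideanSpace ℝ (Fin d)),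
      Real.log (gaussI d y m') = -((d:ℝ)) / 2 * Real.log (2 * Real.pi) - ‖y - m'‖ ^ 2 / 2 := by
    intro y m'
    unfold gaussI
    have h2π : (0:ℝ) < 2 * Real.pi := by positivity
    rw [Real.log_mul (Real.rpow_pos_of_pos h2π _).ne' (Real.exp_ne_zero _),
      Real.log_rpow h2π, Real.log_exp]
    ring
  have hS : ∀ c i, 0 < ∑ m', π c m' * gaussI d (x c i) (μ m') := by
    intro c i
    exact Finset.sum_pos (fun m _ => mul_pos (hπpos c m) (hg _ _)) Finset.univ_nonempty
  have hqpos : ∀ c i m, 0 < q c i m := by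
    intro c i m
    rw [hq]
    exact div_pos (mul_pos (hπpos c m) (hg _ _)) (hS c i)
  have hqsum : ∀ c i, ∑ m, q c i m = 1 := by
    intro c i
    simp only [hq]
    rw [← Finset.sum_div, div_self (hS c i).ne']
  have hsumiq : ∀ c m, ∑ i, q c i m = (N c : ℝ) * π' c m := by
    intro c m
    rw [hπ' c m, ← mul_assoc, mul_inv_cancel₀ (hNne c), one_mul]
  have hπ'pos : ∀ c m, 0 < π' c m := by
    intro c m
    rw [hπ']
    exact mul_pos (inv_pos.mpr (by exact_mod_cast Nat.lt_of_lt_of_le Nat.zero_lt_one (hN c)))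
      (Finset.sum_pos (fun i _ => hqpos c i m) Finset.univ_nonempty)
  have hπ'sum : ∀ c, ∑ m, π' c m = 1 := by
    intro c
    simp only [hπ']
    rw [← Finset.mul_sum, Finset.sum_comm]
    have : ∑ i, ∑ m, q c i m = (N c : ℝ) := by
      rw [Finset.sum_congr rfl fun i _ => hqsum c i]
      simp
    rw [this, inv_mul_cancel₀ (hNne c)]
  -- Step 1 : logLik μ π = surrogate μ π q
  have hFG : logLik d C M N x μ π = surrogate d C M N x μ π q := by
    unfold logLik surrogate
    refine Finset.sum_congr rfl fun c _ => Finset.sum_congr rfl fun i _ => ?_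
    have hterm : ∀ m, q c i m *
        (Real.log (π c m) - (d : ℝ) / 2 * Real.log (2 * Real.pi)
          - ‖x c i - μ m‖ ^ 2 / 2 - Real.log (q c i m))
        = q c i m * Real.log (∑ m', π c m' * gaussI d (x c i) (μ m')) := by
      intro m
      congr 1
      have hlq : Real.log (q c i m) = Real.log (π c m) + Real.log (gaussI d (x c i) (μ m))
          - Real.log (∑ m', π c m' * gaussI d (x c i) (μ m')) := by
        rw [hq, Real.log_div (mul_pos (hπpos c m) (hg _ _)).ne' (hS c i).ne',
          Real.log_mul (hπpos c m).ne' (hg _ _).ne']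
      rw [hlq, hlogg]
      ring
    rw [Finset.sum_congr rfl (fun m _ => hterm m), ← Finset.sum_mul, hqsum c i, one_mul]
  -- Step 3 (M-step) : surrogate μ π q ≤ surrogate μ' π' q
  have hstep : surrogate d C M N x μ π q ≤ surrogate d C M N x μ' π' q := by
    have hπpart : ∑ c, ∑ i, ∑ m, q c i m * Real.log (π c m)
        ≤ ∑ c, ∑ i, ∑ m, q c i m * Real.log (π' c m) := by
      refine Finset.sum_le_sum fun c _ => ?_
      have hswap : ∀ (r : Fin M → ℝ), ∑ i, ∑ m, q c i m * r m
          = (N c : ℝ) * ∑ m, π' c m * r m := by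
        intro r
        rw [Finset.sum_comm, Finset.mul_sum]
        refine Finset.sum_congr rfl fun m _ => ?_
        rw [← Finset.sum_mul, hsumiq c m]
        ring
      rw [hswap (fun m => Real.log (π c m)), hswap (fun m => Real.log (π' c m))]
      refine mul_le_mul_of_nonneg_left ?_ (by positivity)
      exact cross_entropy_le (π' c) (π c) (hπ'pos c) (hπpos c) (hπ'sum c) (hπsum c)
    have hμpart : ∑ c, ∑ i, ∑ m, q c i m * (‖x c i - μ' m‖ ^ 2 / 2)
        ≤ ∑ c, ∑ i, ∑ m, q c i m * (‖x c i - μ m‖ ^ 2 / 2) := by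
      have hsig : ∀ {β : Type} [AddCommMonoid β] (f : (c : Fin C) → Fin (N c) → β),
          ∑ p : (Σ c : Fin C, Fin (N c)), f p.1 p.2 = ∑ c, ∑ i, f c i := by
        intro β _ f
        rw [← Finset.univ_sigma_univ, Finset.sum_sigma]
      have key : ∀ m, ∑ c, ∑ i, q c i m * ‖x c i - μ' m‖ ^ 2
          ≤ ∑ c, ∑ i, q c i m * ‖x c i - μ m‖ ^ 2 := by
        intro m
        have hW : (∑ c, ∑ i, q c i m) • μ' m = ∑ c, ∑ i, q c i m • x c i := by
          rw [hμ' m, smul_smul, mul_inv_cancel₀ (hden m).ne', one_smul]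
        have hzero : ∑ c, ∑ i, q c i m • (x c i - μ' m) = 0 := by
          simp only [smul_sub, Finset.sum_sub_distrib, ← Finset.sum_smul]
          rw [hW, sub_self]
        have hz2 : ∑ p : (Σ c : Fin C, Fin (N c)), q p.1 p.2 m • (x p.1 p.2 - μ' m) = 0 := by
          rw [hsig (fun c i => q c i m • (x c i - μ' m))]
          exact hzero
        have hmin := wmean_min (fun p : (Σ c : Fin C, Fin (N c)) => q p.1 p.2 m)
          (fun p => x p.1 p.2) (fun p => (hqpos p.1 p.2 m).le) (μ' m) (μ m) hz2
        calc ∑ c, ∑ i, q c i m * ‖x c i - μ' m‖ ^ 2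
            = ∑ p : (Σ c : Fin C, Fin (N c)), q p.1 p.2 m * ‖x p.1 p.2 - μ' m‖ ^ 2 :=
              (hsig (fun c i => q c i m * ‖x c i - μ' m‖ ^ 2)).symm
          _ ≤ ∑ p : (Σ c : Fin C, Fin (N c)), q p.1 p.2 m * ‖x p.1 p.2 - μ m‖ ^ 2 := hmin
          _ = ∑ c, ∑ i, q c i m * ‖x c i - μ m‖ ^ 2 :=
              hsig (fun c i => q c i m * ‖x c i - μ m‖ ^ 2)
      have hhalf : ∀ (ν : Fin M → EuclideanSpace ℝ (Fin d)),
          ∑ c, ∑ i, ∑ m, q c i m * (‖x c i - ν m‖ ^ 2 / 2)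
          = (∑ m, ∑ c, ∑ i, q c i m * ‖x c i - ν m‖ ^ 2) / 2 := by
        intro ν
        calc ∑ c, ∑ i, ∑ m, q c i m * (‖x c i - ν m‖ ^ 2 / 2)
            = ∑ c, ∑ m, ∑ i, q c i m * (‖x c i - ν m‖ ^ 2 / 2) :=
              Finset.sum_congr rfl fun c _ => Finset.sum_comm
          _ = ∑ m, ∑ c, ∑ i, q c i m * (‖x c i - ν m‖ ^ 2 / 2) := Finset.sum_comm
          _ = (∑ m, ∑ c, ∑ i, q c i m * ‖x c i - ν m‖ ^ 2) / 2 := by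
              rw [Finset.sum_div]
              refine Finset.sum_congr rfl fun m _ => ?_
              rw [Finset.sum_div]
              refine Finset.sum_congr rfl fun c _ => ?_
              rw [Finset.sum_div]
              refine Finset.sum_congr rfl fun i _ => ?_
              ring
      rw [hhalf μ, hhalf μ']
      have hsum := Finset.sum_le_sum (fun m (_ : m ∈ Finset.univ) => key m)
      linarith
    unfold surrogate
    simp only [mul_sub, Finset.sum_sub_distrib]
    linarith [hπpart, hμpart]
  have hGF' : surrogate d C M N x μ' π' q ≤ logLik d C M N x μ' π' := by
    unfold logLik surrogate
    refine Finset.sum_le_sum fun c _ => Finset.sum_le_sum fun i _ => ?_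
    have hgibbs := gibbs_sum_le (q c i) (fun m => π' c m * gaussI d (x c i) (μ' m))
      (hqpos c i) (fun m => mul_pos (hπ'pos c m) (hg _ _)) (hqsum c i)
    refine le_trans (le_of_eq ?_) hgibbs
    refine Finset.sum_congr rfl fun m _ => ?_
    rw [Real.log_mul (hπ'pos c m).ne' (hg _ _).ne', hlogg]
    ring
  calc logLik d C M N x μ π = surrogate d C M N x μ π q := hFG
    _ ≤ surrogate d C M N x μ' π' q := hstep
    _ ≤ logLik d C M N x μ' π' := hGF'
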